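/- Under the family of linear maps f_t(e₁)=t e₁ + e₄, f_t(e₂)=(t²+1)e₂, f_t(e₃)=t(t²+1)e₃, f_t(e₄)=t e₁ + t e₄ applied to the Jordan algebra φ₂ (φ₂(e₁,e₁)=e₂, φ₂(e₁,e₂)=e₃, φ₂(e₄,e₄)=e₂), the limit as t→0 of f_t⁻¹∘φ₂∘(f_t×f_t) exists and defines the Jordan algebra φ₅ with φ₅(e₁,e₁)=e₂, φ₅(e₁,e₂)=e₃, φ₅(e₂,e₄)=e₃; hence φ₅ is a contraction of φ₂. -/

import Mathlib

/-- Bilinearity of a plain product. -/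
def IsBilin (K : Type*) [Field K] {V : Type*} [AddCommGroup V] [Module K V]
    (φ : V → V → V) : Prop :=
  (∀ (a : K) (x y z : V), φ (a • x + y) z = a • φ x z + φ y z) ∧
  (∀ (a : K) (x y z : V), φ x (a • y + z) = a • φ x y + φ x z)

/-- Commutativity (symmetry) of the product. -/
def IsComm {V : Type*} (φ : V → V → V) : Prop := ∀ x y, φ x y = φ y x

/-- The Jordan identity. -/
def JordanId {V : Type*} (φ : V → V → V) : Prop :=
  ∀ x y, φ (φ x x) (φ x y) = φ x (φ (φ x x) y)

/-- Lower central series: `lcs K φ 0 = C¹ = V`, and `lcs K φ m` is the term `C^{m+1}`. -/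
def lcs (K : Type*) [Field K] {V : Type*} [AddCommGroup V] [Module K V]
    (φ : V → V → V) : ℕ → Submodule K V
  | 0 => ⊤
  | m + 1 => Submodule.span K {z | ∃ x ∈ lcs K φ m, ∃ y, z = φ x y}

/-- Nilpotency: some term of the lower central series vanishes. -/
def IsNilp (K : Type*) [Field K] {V : Type*} [AddCommGroup V] [Module K V]
    (φ : V → V → V) : Prop := ∃ k, lcs K φ k = ⊥
/-- φ₂(e₁,e₁)=e₂, φ₂(e₁,e₂)=e₃, φ₂(e₄,e₄)=e₂ on ℂ⁴. -/
def χ₂ (x y : Fin 4 → ℂ) : Fin 4 → ℂ :=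
  ![0, x 0 * y 0 + x 3 * y 3, x 0 * y 1 + x 1 * y 0, 0]

/-- φ₅(e₁,e₁)=e₂, φ₅(e₁,e₂)=e₃, φ₅(e₂,e₄)=e₃ on ℂ⁴. -/
def χ₅ (x y : Fin 4 → ℂ) : Fin 4 → ℂ :=
  ![0, x 0 * y 0, x 0 * y 1 + x 1 * y 0 + x 1 * y 3 + x 3 * y 1, 0]

/-- f_t(e₁)=t e₁ + e₄, f_t(e₂)=(t²+1)e₂, f_t(e₃)=t(t²+1)e₃, f_t(e₄)=t e₁ + t e₄. -/
def ft (t : ℂ) (x : Fin 4 → ℂ) : Fin 4 → ℂ :=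
  ![t * x 0 + t * x 3, (t ^ 2 + 1) * x 1, t * (t ^ 2 + 1) * x 2, x 0 + t * x 3]

/-- The inverse family f_t⁻¹. -/
noncomputable def gt (t : ℂ) (y : Fin 4 → ℂ) : Fin 4 → ℂ :=
  ![(y 3 - y 0) / (1 - t), y 1 / (t ^ 2 + 1), y 2 / (t * (t ^ 2 + 1)),
    (y 0 - t * y 3) / (t * (1 - t))]

/-- φ₅ is a contraction of φ₂ by the family f_t. -/
theorem chi_five_contraction_of_chi_two :
    (∀ t : ℂ, t ≠ 0 → t ≠ 1 → t ^ 2 + 1 ≠ 0 →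
      ∀ x, gt t (ft t x) = x ∧ ft t (gt t x) = x) ∧
    ∀ x y : Fin 4 → ℂ,
      Filter.Tendsto (fun t : ℂ => gt t (χ₂ (ft t x) (ft t y)))
        (nhdsWithin 0 {(0 : ℂ)}ᶜ) (nhds (χ₅ x y)) := by
  constructor
  · intro t ht0 ht1 htsq x
    have h1 : (1 : ℂ) - t ≠ 0 := sub_ne_zero_of_ne (Ne.symm ht1)
    constructor <;> (funext i; fin_cases i <;> simp [gt, ft] <;> field_simp <;> ring)
  · intro x y
    have key : ∀ᶠ t : ℂ in nhdsWithin 0 {(0:ℂ)}ᶜ,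
        gt t (χ₂ (ft t x) (ft t y)) =
        ![0, (t^2*(x 0 + x 3)*(y 0 + y 3) + (x 0 + t*x 3)*(y 0 + t*y 3))/(t^2+1),
          x 0*y 1 + x 1*y 0 + x 1*y 3 + x 3*y 1, 0] := by
      have h1 : ∀ᶠ t : ℂ in nhdsWithin 0 {(0:ℂ)}ᶜ, t ≠ 0 := by
        filter_upwards [self_mem_nhdsWithin] with t ht using ht
      have h2 : ∀ᶠ t : ℂ in nhdsWithin 0 {(0:ℂ)}ᶜ, ‖t‖ < 1 := by
        apply Filter.Eventually.filter_mono nhdsWithin_le_nhds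
        have hn : Filter.Tendsto (fun t : ℂ => ‖t‖) (nhds 0) (nhds 0) := by
          simpa using (continuous_norm.tendsto (0:ℂ))
        exact hn.eventually_lt_const one_pos
      filter_upwards [h1, h2] with t ht hlt
      have htsq : t ^ 2 + 1 ≠ 0 := by
        intro h
        have h2' : t ^ 2 = -1 := by linear_combination h
        have hnn : ‖t‖ ^ 2 = 1 := by rw [← norm_pow, h2']; simp
        nlinarith [norm_nonneg t]
      funext i; fin_cases i <;> simp [gt, χ₂, ft] <;> field_simp <;> ring
    rw [Filter.tendsto_congr' key]
    rw [tendsto_pi_nhds]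
    intro i
    have hnum : Filter.Tendsto
        (fun t : ℂ => t^2*(x 0 + x 3)*(y 0 + y 3) + (x 0 + t*x 3)*(y 0 + t*y 3))
        (nhds 0) (nhds (x 0 * y 0)) := by
      have hc : Continuous
          (fun t : ℂ => t^2*(x 0 + x 3)*(y 0 + y 3) + (x 0 + t*x 3)*(y 0 + t*y 3)) := by
        fun_prop
      simpa using hc.tendsto 0
    have hden : Filter.Tendsto (fun t : ℂ => t^2 + 1) (nhds 0) (nhds 1) := by
      have hc : Continuous (fun t : ℂ => t^2 + 1) := by fun_prop
      simpa using hc.tendsto 0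
    have hdiv := (hnum.div hden (by norm_num)).mono_left
      (nhdsWithin_le_nhds (s := {(0:ℂ)}ᶜ))
    fin_cases i <;> simp [χ₅] <;>
      first
      | exact tendsto_const_nhds
      | simpa [Pi.div_def] using hdiv
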